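/- Let n ≥ 2 and let S_n(Sym_n) be the monoid presented by generators x_1,…,x_n and relations x_{σ(1)}x_{σ(2)}⋯x_{σ(n)} = x_1x_2⋯x_n for all σ ∈ Sym_n. Then for every k ≥ 2 and all indices i_1,…,i_k with 2 ≤ i_1,…,i_k ≤ n, the identity x_ε·x_{i_1}x_{i_2}⋯x_{i_k} = x_ε·x_{j_1}x_{j_2}⋯x_{j_k} holds in S_n(Sym_n), where (j_1,…,j_k) is the nondecreasing rearrangement of (i_1,…,i_k) and x_ε = x_1x_2⋯x_n. -/

import Mathlib

/-- The word `x_{σ(1)} x_{σ(2)} ⋯ x_{σ(n)}` in the free monoid on `n` generators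
(generator `x_j` is indexed by `j-1 : Fin n`). -/
def permWord {n : ℕ} (σ : Equiv.Perm (Fin n)) : FreeMonoid (Fin n) :=
  FreeMonoid.ofList (List.ofFn fun i => σ i)

/-- The word `x_ε = x_1 x_2 ⋯ x_n`. -/
def epsWord (n : ℕ) : FreeMonoid (Fin n) :=
  FreeMonoid.ofList (List.ofFn fun i : Fin n => i)

/-- The defining relations `x_{σ(1)} ⋯ x_{σ(n)} = x_1 ⋯ x_n`, `σ ∈ Sym_n`. -/
def symRel (n : ℕ) : FreeMonoid (Fin n) → FreeMonoid (Fin n) → Prop :=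
  fun a b => ∃ σ : Equiv.Perm (Fin n), a = permWord σ ∧ b = epsWord n

/-- The canonical projection from the free monoid onto `S_n(Sym_n)`. -/
def proj (n : ℕ) : FreeMonoid (Fin n) →* PresentedMonoid (symRel n) :=
  PresentedMonoid.mk (symRel n)

/-- `u` contains a subword of the form `x_{σ(1)} ⋯ x_{σ(n)}` for some `σ ∈ Sym_n`. -/
def HasPermSubword {n : ℕ} (u : FreeMonoid (Fin n)) : Prop :=
  ∃ (σ : Equiv.Perm (Fin n)) (a b : FreeMonoid (Fin n)), u = a * permWord σ * b

/-- The word `x_1^{m_1} · x_ε · x_2^{m_2} ⋯ x_n^{m_n}` (0-indexed: `m i` is the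
exponent of generator `i`). -/
def normalWord (n : ℕ) (h : 0 < n) (m : Fin n → ℕ) : FreeMonoid (Fin n) :=
  FreeMonoid.ofList (List.replicate (m ⟨0, h⟩) ⟨0, h⟩) * epsWord n *
    FreeMonoid.ofList (((List.finRange n).drop 1).flatMap fun i => List.replicate (m i) i)

lemma proj_permWord {n : ℕ} (σ : Equiv.Perm (Fin n)) :
    proj n (permWord σ) = proj n (epsWord n) :=
  (Con.eq _).mpr (ConGen.Rel.of _ _ ⟨σ, rfl, rfl⟩)

lemma proj_of_perm_finRange {n : ℕ} (L : List (Fin n)) (h : L.Perm (List.finRange n)) :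
    proj n (FreeMonoid.ofList L) = proj n (epsWord n) := by
  have hlen : L.length = n := by simpa using h.length_eq
  have hnd : L.Nodup := h.nodup_iff.mpr (List.nodup_finRange n)
  have hinj : Function.Injective (fun i : Fin n => L.get (Fin.cast hlen.symm i)) := by
    intro a b hab
    have := List.nodup_iff_injective_get.mp hnd hab
    simpa [Fin.ext_iff] using this
  have hbij : Function.Bijective (fun i : Fin n => L.get (Fin.cast hlen.symm i)) :=
    (Finite.injective_iff_bijective).mp hinj
  set σ : Equiv.Perm (Fin n) := Equiv.ofBijective _ hbij
  have heq : permWord σ = FreeMonoid.ofList L := by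
    show FreeMonoid.ofList _ = _
    congr 1
    apply List.ext_get (by simp [hlen])
    intro i h1 h2
    simp [σ]
  rw [← heq, proj_permWord]

/-- `proj e` commutes with every generator. -/
lemma eps_comm {n : ℕ} (a : Fin n) :
    proj n (epsWord n) * proj n (FreeMonoid.of a) =
      proj n (FreeMonoid.of a) * proj n (epsWord n) := by
  have ha : a ∈ List.finRange n := List.mem_finRange a
  have h1 : (a :: (List.finRange n).erase a).Perm (List.finRange n) :=
    (List.perm_cons_erase ha).symm
  have h2 : ((List.finRange n).erase a ++ [a]).Perm (List.finRange n) :=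
    (List.perm_append_singleton _ _).trans h1
  calc proj n (epsWord n) * proj n (FreeMonoid.of a)
      = proj n (FreeMonoid.ofList (a :: (List.finRange n).erase a)) * proj n (FreeMonoid.of a) := by
        rw [proj_of_perm_finRange _ h1]
    _ = proj n (FreeMonoid.of a) * proj n (FreeMonoid.ofList ((List.finRange n).erase a ++ [a])) := by
        rw [← map_mul, ← map_mul]; rfl
    _ = proj n (FreeMonoid.of a) * proj n (epsWord n) := by
        rw [proj_of_perm_finRange _ h2]

/-- `proj e` is central. -/
lemma eps_central {n : ℕ} (x : PresentedMonoid (symRel n)) :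
    proj n (epsWord n) * x = x * proj n (epsWord n) := by
  induction x using PresentedMonoid.inductionOn with
  | h a =>
    induction a using FreeMonoid.recOn with
    | one => show proj n (epsWord n) * proj n 1 = proj n 1 * proj n (epsWord n); simp
    | of_mul b w ih =>
      have ih' : proj n (epsWord n) * proj n w = proj n w * proj n (epsWord n) := ih
      show proj n (epsWord n) * proj n (FreeMonoid.of b * w)
          = proj n (FreeMonoid.of b * w) * proj n (epsWord n)
      rw [map_mul, ← mul_assoc, eps_comm, mul_assoc, ih', ← mul_assoc]

lemma eps_swap {n : ℕ} (a b : Fin n) (ha : a.val ≠ 0) (hb : b.val ≠ 0) :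
    proj n (epsWord n) * proj n (FreeMonoid.of a) * proj n (FreeMonoid.of b) =
      proj n (epsWord n) * proj n (FreeMonoid.of b) * proj n (FreeMonoid.of a) := by
  rcases eq_or_ne a b with rfl | hab
  · rfl
  have hn : 0 < n := a.pos
  set R := List.finRange n with hR
  set z : Fin n := ⟨0, hn⟩ with hz
  have haz : z ≠ a := by simp [hz, Fin.ext_iff]; omega
  have hbz : z ≠ b := by simp [hz, Fin.ext_iff]; omega
  set u : List (Fin n) := ((R.erase a).erase b).erase z with hu
  have hbmem : b ∈ R.erase a := (List.mem_erase_of_ne hab.symm).mpr (List.mem_finRange b)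
  have hzmem : z ∈ (R.erase a).erase b :=
    (List.mem_erase_of_ne hbz).mpr ((List.mem_erase_of_ne haz).mpr (List.mem_finRange z))
  -- R ~ a :: b :: z :: u
  have p0 : R.Perm (a :: b :: z :: u) := by
    refine (List.perm_cons_erase (List.mem_finRange a)).trans (List.Perm.cons a ?_)
    refine (List.perm_cons_erase hbmem).trans (List.Perm.cons b ?_)
    exact List.perm_cons_erase hzmem
  have pL1 : (a :: b :: (u ++ [z])).Perm R := by
    refine List.Perm.trans ?_ p0.symm
    exact ((List.perm_append_singleton z u).cons b).cons a
  have pL2 : (u ++ [z, a, b]).Perm R := by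
    refine List.Perm.trans (List.perm_append_comm) (List.Perm.trans ?_ p0.symm)
    exact (List.Perm.swap a z _).trans ((List.Perm.swap b z u).cons a)
  have pL3 : (u ++ [z, b, a]).Perm R := by
    refine List.Perm.trans (List.perm_append_comm) (List.Perm.trans ?_ p0.symm)
    exact ((List.Perm.swap b z _).trans ((List.Perm.swap a z u).cons b)).trans
      (List.Perm.swap a b _)
  -- key free monoid identities
  have key1 : FreeMonoid.ofList (a :: b :: (u ++ [z])) * FreeMonoid.of a * FreeMonoid.of b
      = FreeMonoid.of a * FreeMonoid.of b * FreeMonoid.ofList (u ++ [z, a, b]) := by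
    show FreeMonoid.ofList _ = FreeMonoid.ofList _
    congr 1
    simp
  have key2 : FreeMonoid.ofList (a :: b :: (u ++ [z])) * FreeMonoid.of b * FreeMonoid.of a
      = FreeMonoid.of a * FreeMonoid.of b * FreeMonoid.ofList (u ++ [z, b, a]) := by
    show FreeMonoid.ofList _ = FreeMonoid.ofList _
    congr 1
    simp
  calc proj n (epsWord n) * proj n (FreeMonoid.of a) * proj n (FreeMonoid.of b)
      = proj n (FreeMonoid.ofList (a :: b :: (u ++ [z]))) * proj n (FreeMonoid.of a)
          * proj n (FreeMonoid.of b) := by rw [proj_of_perm_finRange _ pL1]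
    _ = proj n (FreeMonoid.of a) * proj n (FreeMonoid.of b)
          * proj n (FreeMonoid.ofList (u ++ [z, a, b])) := by
        rw [← map_mul, ← map_mul, key1, map_mul, map_mul]
    _ = proj n (FreeMonoid.of a) * proj n (FreeMonoid.of b) * proj n (epsWord n) := by
        rw [proj_of_perm_finRange _ pL2]
    _ = proj n (FreeMonoid.of a) * proj n (FreeMonoid.of b)
          * proj n (FreeMonoid.ofList (u ++ [z, b, a])) := by
        rw [proj_of_perm_finRange _ pL3]
    _ = proj n (FreeMonoid.ofList (a :: b :: (u ++ [z]))) * proj n (FreeMonoid.of b)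
          * proj n (FreeMonoid.of a) := by
        rw [← map_mul, ← map_mul, ← key2, map_mul, map_mul]
    _ = proj n (epsWord n) * proj n (FreeMonoid.of b) * proj n (FreeMonoid.of a) := by
        rw [proj_of_perm_finRange _ pL1]

/-- For `k ≥ 2` indices `i_1, …, i_k` with `2 ≤ i_t ≤ n` (0-indexed: values ≠ 0),
`x_ε · x_{i_1} ⋯ x_{i_k} = x_ε · x_{j_1} ⋯ x_{j_k}` holds in `S_n(Sym_n)`, where
`(j_1, …, j_k)` is the nondecreasing rearrangement of `(i_1, …, i_k)`. -/
theorem eps_mul_sorted (n : ℕ) (hn : 2 ≤ n) (l l' : List (Fin n))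
    (hlen : 2 ≤ l.length) (hl : ∀ a ∈ l, a.val ≠ 0)
    (hperm : l.Perm l') (hsorted : l'.Pairwise (· ≤ ·)) :
    proj n (epsWord n) * proj n (FreeMonoid.ofList l) =
      proj n (epsWord n) * proj n (FreeMonoid.ofList l') := by
  clear hn hlen hsorted
  induction hperm with
  | nil => rfl
  | cons x h ih =>
    rename_i t1 t2
    have hx : (x : Fin n).val ≠ 0 := hl x List.mem_cons_self
    have hl' : ∀ a ∈ t1, a.val ≠ 0 := fun a haa => hl a (List.mem_cons_of_mem _ haa)
    have e1 : FreeMonoid.ofList (x :: t1) = FreeMonoid.of x * FreeMonoid.ofList t1 := rfl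
    have e2 : FreeMonoid.ofList (x :: t2) = FreeMonoid.of x * FreeMonoid.ofList t2 := rfl
    rw [e1, e2, map_mul, map_mul, ← mul_assoc, eps_comm, mul_assoc, ih hl', ← mul_assoc,
      ← eps_comm, mul_assoc]
  | swap x y t =>
    have hx : (x : Fin n).val ≠ 0 := hl x (by simp)
    have hy : (y : Fin n).val ≠ 0 := hl y (by simp)
    have e1 : FreeMonoid.ofList (y :: x :: t)
        = FreeMonoid.of y * FreeMonoid.of x * FreeMonoid.ofList t := rfl
    have e2 : FreeMonoid.ofList (x :: y :: t)
        = FreeMonoid.of x * FreeMonoid.of y * FreeMonoid.ofList t := rfl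
    rw [e1, e2, map_mul, map_mul, map_mul, map_mul, ← mul_assoc, ← mul_assoc, ← mul_assoc,
      ← mul_assoc, eps_swap y x hy hx]
  | trans h1 h2 ih1 ih2 =>
    rename_i t1 t2 t3
    have hl2 : ∀ a ∈ t2, a.val ≠ 0 := fun a haa => hl a (h1.symm.subset haa)
    exact (ih1 hl).trans (ih2 hl2)
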